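/- Let μ, ν be Borel probability measures on ℝ with finite p-th moments (p ≥ 1), and let q_μ, q_ν denote their quantile functions. Then W_p^p(μ, ν) = ∫_0^1 |q_μ(t) − q_ν(t)|^p dt. -/

import Mathlib

open MeasureTheory ENNReal

/-- `W_p^p(μ, ν)` on `ℝ`: the Kantorovich optimal transport cost for the cost `|x - y|^p`. -/
noncomputable def Wpp (p : ℝ) (μ ν : Measure ℝ) : ℝ≥0∞ :=
  ⨅ (γ : Measure (ℝ × ℝ)) (_ : γ.map Prod.fst = μ) (_ : γ.map Prod.snd = ν),
    ∫⁻ q, (‖q.1 - q.2‖₊ : ℝ≥0∞) ^ p ∂γ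

/-- The quantile function `q_μ(t) = inf {x : μ((-∞, x]) ≥ t}`. -/
noncomputable def quantile (μ : Measure ℝ) (t : ℝ) : ℝ :=
  sInf {x : ℝ | ENNReal.ofReal t ≤ μ (Set.Iic x)}

open Set Filter Topology

section Aux

variable {μ ν : Measure ℝ}

lemma quantile_set_upward (t : ℝ) {y z : ℝ} (hy : y ∈ {x : ℝ | ENNReal.ofReal t ≤ μ (Set.Iic x)})
    (hyz : y ≤ z) : z ∈ {x : ℝ | ENNReal.ofReal t ≤ μ (Set.Iic x)} :=
  le_trans hy (measure_mono (Iic_subset_Iic.2 hyz))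

lemma quantile_set_nonempty [IsProbabilityMeasure μ] {t : ℝ} (ht : t < 1) :
    {x : ℝ | ENNReal.ofReal t ≤ μ (Set.Iic x)}.Nonempty := by
  have h1 : ENNReal.ofReal t < 1 := by
    rcases le_or_gt t 0 with h | h
    · simpa [ENNReal.ofReal_eq_zero.2 h] using zero_lt_one
    · rwa [← ENNReal.ofReal_one, ENNReal.ofReal_lt_ofReal_iff zero_lt_one]
  have htend := tendsto_measure_Iic_atTop (μ := μ)
  rw [measure_univ] at htend
  have := htend.eventually_const_le h1
  rcases this.exists with ⟨x, hx⟩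
  exact ⟨x, hx⟩

lemma quantile_set_bddBelow [IsProbabilityMeasure μ] {t : ℝ} (ht : 0 < t) :
    BddBelow {x : ℝ | ENNReal.ofReal t ≤ μ (Set.Iic x)} := by
  have h0 : (0:ℝ≥0∞) < ENNReal.ofReal t := ENNReal.ofReal_pos.2 ht
  have hempty : (⋂ x : ℝ, Iic x) = (∅ : Set ℝ) := by
    ext u; simp only [mem_iInter, mem_Iic, mem_empty_iff_false, iff_false, not_forall, not_le]
    exact ⟨u - 1, by linarith⟩
  have htend : Tendsto (fun x => μ (Iic x)) atBot (𝓝 0) := by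
    have := tendsto_measure_iInter_atBot (μ := μ) (s := fun x : ℝ => Iic x)
      (fun x => nullMeasurableSet_Iic) (fun a b hab => Iic_subset_Iic.2 hab)
      ⟨0, measure_ne_top _ _⟩
    rw [hempty] at this
    simpa [Function.comp_def] using this
  have := (htend.eventually_lt_const h0)
  rcases eventually_atBot.1 this with ⟨a, ha⟩
  refine ⟨a, fun y hy => ?_⟩
  by_contra hya
  exact absurd hy (not_le.2 (ha y (le_of_not_ge hya)))

lemma quantile_le_iff [IsProbabilityMeasure μ] {t : ℝ} (ht : t ∈ Set.Ioo (0:ℝ) 1) (x : ℝ) :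
    quantile μ t ≤ x ↔ ENNReal.ofReal t ≤ μ (Set.Iic x) := by
  constructor
  · intro h
    have key : ∀ ε : ℝ, 0 < ε → ENNReal.ofReal t ≤ μ (Set.Iic (x + ε)) := by
      intro ε hε
      have hlt : sInf {x : ℝ | ENNReal.ofReal t ≤ μ (Set.Iic x)} < x + ε :=
        lt_of_le_of_lt h (by linarith)
      rcases (csInf_lt_iff (quantile_set_bddBelow ht.1) (quantile_set_nonempty ht.2)).1 hlt
        with ⟨y, hy, hyx⟩
      exact quantile_set_upward t hy hyx.le
    have htend : Tendsto (fun n : ℕ => μ (Iic (x + 1/(n+1)))) atTop (𝓝 (μ (Iic x))) := by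
      have h1 : (⋂ n : ℕ, Iic (x + 1/(n+1) : ℝ)) = Iic x := by
        ext u
        simp only [mem_iInter, mem_Iic]
        constructor
        · intro h
          by_contra hux
          push_neg at hux
          obtain ⟨n, hn⟩ := exists_nat_one_div_lt (sub_pos.2 hux)
          have := h n
          push_cast at hn ⊢
          linarith
        · intro h n
          have : (0:ℝ) < 1/(n+1) := by positivity
          linarith
      have := tendsto_measure_iInter_atTop (μ := μ)
        (s := fun n : ℕ => Iic (x + 1/(n+1)))
        (fun n => nullMeasurableSet_Iic)
        (fun m n hmn => Iic_subset_Iic.2 (by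
          have : (1:ℝ)/(n+1) ≤ 1/(m+1) := by
            apply one_div_le_one_div_of_le (by positivity) (by have := (Nat.cast_le (α := ℝ)).2 hmn; linarith)
          linarith))
        ⟨0, measure_ne_top _ _⟩
      rw [h1] at this
      exact this
    exact ge_of_tendsto htend (Eventually.of_forall fun n => key _ (by positivity))
  · intro h
    exact csInf_le (quantile_set_bddBelow ht.1) h

lemma quantile_le_iff' [IsProbabilityMeasure μ] {t : ℝ} (ht : t ∈ Set.Ioo (0:ℝ) 1) (x : ℝ) :
    quantile μ t ≤ x ↔ t ≤ (μ (Set.Iic x)).toReal := by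
  rw [quantile_le_iff ht, ENNReal.ofReal_le_iff_le_toReal (measure_ne_top _ _)]

lemma measurable_indicator_quantile (μ : Measure ℝ) [IsProbabilityMeasure μ] :
    Measurable ((Set.Ioo (0:ℝ) 1).indicator (quantile μ)) := by
  apply measurable_of_Iic
  intro x
  have : ((Set.Ioo (0:ℝ) 1).indicator (quantile μ)) ⁻¹' Iic x
      = (Ioo (0:ℝ) 1 ∩ Iic ((μ (Set.Iic x)).toReal)) ∪ ((Ioo (0:ℝ) 1)ᶜ ∩ {t : ℝ | (0:ℝ) ≤ x}) := by
    ext t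
    by_cases ht : t ∈ Ioo (0:ℝ) 1
    · simp only [mem_preimage, mem_Iic, indicator_of_mem ht, mem_union, mem_inter_iff, ht,
        true_and, mem_compl_iff, not_true_eq_false, false_and, or_false, mem_Iic]
      exact quantile_le_iff' ht x
    · simp only [mem_preimage, mem_Iic, indicator_of_notMem ht, mem_union, mem_inter_iff, ht,
        false_and, false_or, mem_compl_iff, not_false_eq_true, true_and, mem_setOf_eq]
  rw [this]
  refine (measurableSet_Ioo.inter measurableSet_Iic).union
    (measurableSet_Ioo.compl.inter ?_)
  by_cases h : (0:ℝ) ≤ x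
  · simp [h]
  · simp [h]

lemma aemeasurable_quantile (μ : Measure ℝ) [IsProbabilityMeasure μ] :
    AEMeasurable (quantile μ) (volume.restrict (Set.Ioo (0:ℝ) 1)) := by
  refine ⟨(Set.Ioo (0:ℝ) 1).indicator (quantile μ), measurable_indicator_quantile μ, ?_⟩
  filter_upwards [ae_restrict_mem measurableSet_Ioo] with t ht
  exact (indicator_of_mem ht _).symm

lemma volume_Ioo_inter_Iic {c : ℝ} (hc0 : 0 ≤ c) (hc1 : c ≤ 1) :
    volume (Ioo (0:ℝ) 1 ∩ Iic c) = ENNReal.ofReal c := by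
  rcases eq_or_lt_of_le hc1 with h | h
  · rw [show Ioo (0:ℝ) 1 ∩ Iic c = Ioo 0 1 by rw [← h]; exact inter_eq_left.2 (fun u hu => hu.2.le)]
    simp [← h]
  · rw [show Ioo (0:ℝ) 1 ∩ Iic c = Ioc 0 c by
      ext u; simp only [mem_inter_iff, mem_Ioo, mem_Iic, mem_Ioc]
      exact ⟨fun ⟨⟨h1, _⟩, h3⟩ => ⟨h1, h3⟩, fun ⟨h1, h2⟩ => ⟨⟨h1, lt_of_le_of_lt h2 h⟩, h2⟩⟩]
    simp [Real.volume_Ioc]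

lemma map_quantile (μ : Measure ℝ) [IsProbabilityMeasure μ] :
    Measure.map (quantile μ) (volume.restrict (Set.Ioo (0:ℝ) 1)) = μ := by
  haveI : Fact (volume (Set.Ioo (0:ℝ) 1) < ⊤) := ⟨by simp⟩
  refine Measure.ext_of_Iic _ μ (fun x => ?_)
  rw [Measure.map_apply_of_aemeasurable (aemeasurable_quantile μ) measurableSet_Iic,
    Measure.restrict_apply' measurableSet_Ioo]
  have : quantile μ ⁻¹' Iic x ∩ Ioo 0 1 = Ioo (0:ℝ) 1 ∩ Iic ((μ (Set.Iic x)).toReal) := by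
    ext t
    simp only [mem_inter_iff, mem_preimage, mem_Iic]
    rw [and_comm]
    exact and_congr_right (fun ht => quantile_le_iff' ht x)
  rw [this, volume_Ioo_inter_Iic ENNReal.toReal_nonneg
    (by simpa using ENNReal.toReal_mono one_ne_top prob_le_one),
    ENNReal.ofReal_toReal (measure_ne_top _ _)]

lemma ofReal_toReal_sub {x y : ℝ≥0∞} (hx : x ≠ ⊤) (hy : y ≠ ⊤) :
    ENNReal.ofReal (x.toReal - y.toReal) = x - y := by
  rcases le_total y x with h | h
  · rw [← ENNReal.toReal_sub_of_le h hx, ENNReal.ofReal_toReal (by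
      exact (ne_of_lt (lt_of_le_of_lt (tsub_le_self) (lt_top_iff_ne_top.2 hx))))]
  · rw [ENNReal.ofReal_eq_zero.2 (by
      have := ENNReal.toReal_mono hy h
      linarith), eq_comm, tsub_eq_zero_iff_le]
    exact h

lemma prob_Ioi_sub [IsProbabilityMeasure μ] [IsProbabilityMeasure ν] (r s : ℝ) :
    μ (Set.Ioi r) - ν (Set.Ioi s) = ν (Set.Iic s) - μ (Set.Iic r) := by
  have hμ : μ (Set.Ioi r) = 1 - μ (Set.Iic r) := by
    rw [← Set.compl_Iic, measure_compl measurableSet_Iic (measure_ne_top _ _), measure_univ]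
  have hν : ν (Set.Ioi s) = 1 - ν (Set.Iic s) := by
    rw [← Set.compl_Iic, measure_compl measurableSet_Iic (measure_ne_top _ _), measure_univ]
  rw [hμ, hν, ← ofReal_toReal_sub (measure_ne_top _ _) (measure_ne_top _ _),
    ← ofReal_toReal_sub (by finiteness) (by finiteness)]
  congr 1
  rw [ENNReal.toReal_sub_of_le prob_le_one one_ne_top,
    ENNReal.toReal_sub_of_le prob_le_one one_ne_top]
  simp only [ENNReal.toReal_one]
  ring

/-- general slice lower bound -/
lemma slice_lower (γ : Measure (ℝ × ℝ)) (hγ1 : γ.map Prod.fst = μ) (hγ2 : γ.map Prod.snd = ν)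
    (r s : ℝ) :
    μ (Set.Ioi r) - ν (Set.Ioi s) ≤ γ {q : ℝ × ℝ | q.2 ≤ s ∧ r < q.1} := by
  have hA : γ (Prod.fst ⁻¹' Set.Ioi r) = μ (Set.Ioi r) := by
    rw [← hγ1, Measure.map_apply measurable_fst measurableSet_Ioi]
  have hB : γ (Prod.snd ⁻¹' Set.Ioi s) = ν (Set.Ioi s) := by
    rw [← hγ2, Measure.map_apply measurable_snd measurableSet_Ioi]
  rw [← hA, ← hB, tsub_le_iff_right]
  calc γ (Prod.fst ⁻¹' Set.Ioi r)
      ≤ γ (Prod.fst ⁻¹' Set.Ioi r ∩ {q : ℝ × ℝ | q.2 ≤ s})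
        + γ (Prod.fst ⁻¹' Set.Ioi r \ {q : ℝ × ℝ | q.2 ≤ s}) := measure_le_inter_add_diff _ _ _
    _ ≤ γ {q : ℝ × ℝ | q.2 ≤ s ∧ r < q.1} + γ (Prod.snd ⁻¹' Set.Ioi s) := by
        gcongr γ ?_ + γ ?_
        · intro q hq; exact ⟨hq.2, hq.1⟩
        · intro q hq; simpa using not_le.1 hq.2

lemma vol_Ioo_inter_Ioc {a b : ℝ} (ha : 0 ≤ a) (hb : b ≤ 1) :
    volume (Ioo (0:ℝ) 1 ∩ Ioc a b) = ENNReal.ofReal (b - a) := by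
  apply le_antisymm
  · calc volume (Ioo (0:ℝ) 1 ∩ Ioc a b) ≤ volume (Ioc a b) :=
        measure_mono inter_subset_right
      _ = ENNReal.ofReal (b - a) := Real.volume_Ioc
  · calc ENNReal.ofReal (b - a) = volume (Ioc a b) := Real.volume_Ioc.symm
      _ ≤ volume ((Ioo (0:ℝ) 1 ∩ Ioc a b) ∪ {1}) := by
          apply measure_mono
          intro u hu
          rcases lt_or_ge u 1 with h | h
          · exact Or.inl ⟨⟨lt_of_le_of_lt ha hu.1, h⟩, hu⟩
          · exact Or.inr (le_antisymm (hu.2.trans hb) h)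
      _ ≤ volume (Ioo (0:ℝ) 1 ∩ Ioc a b) + volume ({1} : Set ℝ) := measure_union_le _ _
      _ = volume (Ioo (0:ℝ) 1 ∩ Ioc a b) := by simp

/-- the quantile coupling slice is exactly the Hoeffding bound -/
lemma slice_quantile_coupling (μ ν : Measure ℝ) [IsProbabilityMeasure μ] [IsProbabilityMeasure ν]
    (r s : ℝ) :
    volume ({t : ℝ | quantile ν t ≤ s ∧ r < quantile μ t} ∩ Set.Ioo 0 1)
      = ν (Set.Iic s) - μ (Set.Iic r) := by
  have : {t : ℝ | quantile ν t ≤ s ∧ r < quantile μ t} ∩ Set.Ioo 0 1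
      = Ioo (0:ℝ) 1 ∩ Ioc ((μ (Set.Iic r)).toReal) ((ν (Set.Iic s)).toReal) := by
    ext t
    simp only [mem_inter_iff, mem_setOf_eq, mem_Ioo, mem_Ioc]
    rw [and_comm]
    refine and_congr_right (fun ht => ?_)
    have ht' : t ∈ Set.Ioo (0:ℝ) 1 := ht
    rw [quantile_le_iff' ht', ← not_le, quantile_le_iff' ht', not_le, and_comm]
  rw [this, vol_Ioo_inter_Ioc ENNReal.toReal_nonneg
      (by simpa using ENNReal.toReal_mono one_ne_top prob_le_one),
    ofReal_toReal_sub (measure_ne_top _ _) (measure_ne_top _ _)]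

lemma fubini_slice (γ : Measure (ℝ × ℝ)) [SFinite γ] (t : ℝ) :
    ∫⁻ q, ENNReal.ofReal (q.1 - q.2 - t) ∂γ
      = ∫⁻ s, γ {q : ℝ × ℝ | q.2 ≤ s ∧ s + t < q.1} ∂volume := by
  set A : Set ((ℝ × ℝ) × ℝ) := {p | p.1.2 ≤ p.2 ∧ p.2 + t < p.1.1} with hA
  have hAmeas : MeasurableSet A :=
    (measurableSet_le (measurable_fst.snd) measurable_snd).inter
      (measurableSet_lt (measurable_snd.add_const t) (measurable_fst.fst))
  have h1 : ∀ q : ℝ × ℝ, ENNReal.ofReal (q.1 - q.2 - t)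
      = ∫⁻ s, A.indicator (fun _ => (1:ℝ≥0∞)) (q, s) ∂volume := by
    intro q
    have : (fun s => A.indicator (fun _ => (1:ℝ≥0∞)) (q, s))
        = (Ico q.2 (q.1 - t)).indicator (fun _ => (1:ℝ≥0∞)) := by
      funext s
      simp only [indicator_apply, hA, mem_setOf_eq, mem_Ico, lt_sub_iff_add_lt]
    rw [this]
    rw [show lintegral volume ((Ico q.2 (q.1 - t)).indicator fun _ => (1:ℝ≥0∞))
        = volume (Ico q.2 (q.1 - t)) from lintegral_indicator_one measurableSet_Ico,
      Real.volume_Ico]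
    congr 1
    ring
  calc ∫⁻ q, ENNReal.ofReal (q.1 - q.2 - t) ∂γ
      = ∫⁻ q, ∫⁻ s, A.indicator (fun _ => (1:ℝ≥0∞)) (q, s) ∂volume ∂γ :=
        lintegral_congr h1
    _ = ∫⁻ s, ∫⁻ q, A.indicator (fun _ => (1:ℝ≥0∞)) (q, s) ∂γ ∂volume := by
        apply lintegral_lintegral_swap
        have : Function.uncurry (fun (q : ℝ × ℝ) (s : ℝ) => A.indicator (fun _ => (1:ℝ≥0∞)) (q, s))
            = A.indicator (fun _ => (1:ℝ≥0∞)) := by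
          funext p
          simp [Function.uncurry]
        rw [this]
        exact (measurable_const.indicator hAmeas).aemeasurable
    _ = ∫⁻ s, γ {q : ℝ × ℝ | q.2 ≤ s ∧ s + t < q.1} ∂volume := by
        apply lintegral_congr
        intro s
        have : (fun q : ℝ × ℝ => A.indicator (fun _ => (1:ℝ≥0∞)) (q, s))
            = ({q : ℝ × ℝ | q.2 ≤ s ∧ s + t < q.1}).indicator (fun _ => (1:ℝ≥0∞)) := by
          funext q
          simp only [indicator_apply, hA, mem_setOf_eq]
        rw [this]
        exact lintegral_indicator_one ((measurableSet_le measurable_snd measurable_const).inter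
          (measurableSet_lt measurable_const measurable_fst))

end Aux

noncomputable def sigmaP (p : ℝ) : Measure ℝ :=
  if p = 1 then Measure.dirac 0
  else (volume.restrict (Set.Ioi 0)).withDensity
    (fun t => ENNReal.ofReal (p * (p-1) * t ^ (p-2)))

instance (p : ℝ) : SFinite (sigmaP p) := by
  unfold sigmaP
  split <;> infer_instance

lemma key_integral {p : ℝ} (hp : 1 < p) (z : ℝ) :
    ∫⁻ t in Set.Ioi (0:ℝ),
        ENNReal.ofReal (p * (p-1) * t ^ (p-2)) * ENNReal.ofReal (z - t) ∂volume
      = ENNReal.ofReal (max z 0 ^ p) := by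
  rcases le_or_gt z 0 with hz | hz
  · have h0 : ∫⁻ t in Set.Ioi (0:ℝ),
        ENNReal.ofReal (p * (p-1) * t ^ (p-2)) * ENNReal.ofReal (z - t) ∂volume
        = ∫⁻ _ in Set.Ioi (0:ℝ), (0:ℝ≥0∞) ∂volume :=
      setLIntegral_congr_fun measurableSet_Ioi
        ((fun t (ht : t ∈ Set.Ioi (0:ℝ)) => by
          rw [show ENNReal.ofReal (z - t) = 0 from ENNReal.ofReal_of_nonpos
            (by simp only [Set.mem_Ioi] at ht; linarith), mul_zero]))
    rw [h0, lintegral_zero, max_eq_right hz, Real.zero_rpow (by linarith), ENNReal.ofReal_zero]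
  · have hz' := hz.le
    rw [max_eq_left hz.le]
    rw [← Set.Ioc_union_Ioi_eq_Ioi hz.le,
      lintegral_union measurableSet_Ioi (Set.Ioc_disjoint_Ioi le_rfl)]
    have h2 : ∫⁻ t in Set.Ioi z,
        ENNReal.ofReal (p * (p-1) * t ^ (p-2)) * ENNReal.ofReal (z - t) ∂volume = 0 := by
      have h0 : ∫⁻ t in Set.Ioi z,
          ENNReal.ofReal (p * (p-1) * t ^ (p-2)) * ENNReal.ofReal (z - t) ∂volume
          = ∫⁻ _ in Set.Ioi z, (0:ℝ≥0∞) ∂volume :=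
        setLIntegral_congr_fun measurableSet_Ioi
          ((fun t (ht : t ∈ Set.Ioi z) => by
            rw [show ENNReal.ofReal (z - t) = 0 from ENNReal.ofReal_of_nonpos
              (by simp only [Set.mem_Ioi] at ht; linarith), mul_zero]))
      rw [h0, lintegral_zero]
    rw [h2, add_zero]
    have hcongr : ∫⁻ t in Set.Ioc 0 z,
        ENNReal.ofReal (p * (p-1) * t ^ (p-2)) * ENNReal.ofReal (z - t) ∂volume
        = ∫⁻ t in Set.Ioc 0 z, ENNReal.ofReal (p * (p-1) * t ^ (p-2) * (z - t)) ∂volume := by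
      apply setLIntegral_congr_fun measurableSet_Ioc
      intro t ht
      beta_reduce
      rw [← ENNReal.ofReal_mul]
      exact mul_nonneg (by nlinarith) (Real.rpow_nonneg ht.1.le _)
    rw [hcongr]
    have hmeas : AEStronglyMeasurable (fun t : ℝ => p * (p-1) * t ^ (p-2) * (z - t))
        (volume.restrict (Set.Ioc 0 z)) := by
      have hm : Measurable (fun t : ℝ => t ^ (p-2)) := by measurability
      exact ((hm.const_mul _).mul (measurable_const.sub measurable_id)).aestronglyMeasurable
    have hbase : IntegrableOn (fun t : ℝ => t ^ (p-2)) (Set.Ioc 0 z) volume :=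
      (intervalIntegral.intervalIntegrable_rpow' (by linarith)).1
    have hint : IntegrableOn (fun t : ℝ => p * (p-1) * t ^ (p-2) * (z - t))
        (Set.Ioc 0 z) volume := by
      apply Integrable.mono' ((hbase.const_mul (p * (p-1) * z)))  hmeas
      filter_upwards [ae_restrict_mem measurableSet_Ioc] with t ht
      have ht1 : 0 < t := ht.1
      have ht2 : t ≤ z := ht.2
      have hr : (0:ℝ) ≤ t ^ (p-2) := Real.rpow_nonneg ht1.le _
      have hpp : (0:ℝ) ≤ p * (p-1) := by nlinarith
      rw [Real.norm_eq_abs, abs_of_nonneg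
        (mul_nonneg (mul_nonneg hpp hr) (by linarith))]
      nlinarith [mul_le_mul_of_nonneg_left (sub_le_self z ht1.le)
        (mul_nonneg hpp hr)]
    have hnn : 0 ≤ᵐ[volume.restrict (Set.Ioc 0 z)]
        (fun t : ℝ => p * (p-1) * t ^ (p-2) * (z - t)) := by
      filter_upwards [ae_restrict_mem measurableSet_Ioc] with t ht
      have ht1 : 0 < t := ht.1
      have ht2 : t ≤ z := ht.2
      have hr : (0:ℝ) ≤ t ^ (p-2) := Real.rpow_nonneg ht1.le _
      have hpp : (0:ℝ) ≤ p * (p-1) := by nlinarith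
      exact mul_nonneg (mul_nonneg hpp hr) (by linarith)
    rw [← ofReal_integral_eq_lintegral_ofReal hint hnn]
    congr 1
    rw [← intervalIntegral.integral_of_le hz.le]
    have hID : ∀ t ∈ Set.uIcc (0:ℝ) z,
        p * (p-1) * t ^ (p-2) * (z - t)
          = p * (p-1) * z * t ^ (p-2) - p * (p-1) * t ^ (p-1) := by
      intro t ht
      rcases eq_or_lt_of_le ((Set.uIcc_of_le hz.le ▸ ht).1) with h0 | h0
      · rw [← h0]
        rw [show (0:ℝ) ^ (p-1) = 0 from Real.zero_rpow (by linarith)]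
        ring
      · rw [show t ^ (p-1) = t ^ (p-2) * t by
          rw [← Real.rpow_add_one (ne_of_gt h0) (p-2)]; ring_nf]
        ring
    rw [intervalIntegral.integral_congr hID,
      intervalIntegral.integral_sub
        (((intervalIntegral.intervalIntegrable_rpow' (by linarith)).const_mul _))
        (((intervalIntegral.intervalIntegrable_rpow' (by linarith)).const_mul _)),
      intervalIntegral.integral_const_mul, intervalIntegral.integral_const_mul,
      integral_rpow (Or.inl (by linarith)), integral_rpow (Or.inl (by linarith))]
    rw [show (0:ℝ) ^ (p-2+1) = 0 from Real.zero_rpow (by linarith),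
      show (0:ℝ) ^ (p-1+1) = 0 from Real.zero_rpow (by linarith)]
    rw [show p - 2 + 1 = p - 1 by ring, show p - 1 + 1 = p by ring]
    rw [show z ^ p = z ^ (p-1) * z by
      rw [← Real.rpow_add_one (ne_of_gt hz) (p-1)]; ring_nf]
    have hne1 : p - 1 ≠ 0 := by linarith
    have hne2 : p ≠ 0 := by linarith
    field_simp
    ring

lemma rep_lemma {p : ℝ} (hp : 1 ≤ p) (z : ℝ) :
    ENNReal.ofReal (|z| ^ p)
      = ∫⁻ t, (ENNReal.ofReal (z - t) + ENNReal.ofReal (-z - t)) ∂(sigmaP p) := by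
  rcases eq_or_lt_of_le hp with h1 | h1
  · rw [sigmaP, if_pos h1.symm, lintegral_dirac, sub_zero, sub_zero, ← h1, Real.rpow_one]
    rcases le_total 0 z with h | h
    · rw [ENNReal.ofReal_of_nonpos (by linarith : -z ≤ 0), add_zero, abs_of_nonneg h]
    · rw [ENNReal.ofReal_of_nonpos h, zero_add, abs_of_nonpos h]
  · have hp1 : p ≠ 1 := by linarith
    rw [sigmaP, if_neg hp1]
    have hdens : Measurable (fun t : ℝ => ENNReal.ofReal (p * (p-1) * t ^ (p-2))) := by
      have hm : Measurable (fun t : ℝ => t ^ (p-2)) := by measurability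
      exact (hm.const_mul _).ennreal_ofReal
    have hg : Measurable (fun t : ℝ => ENNReal.ofReal (z - t) + ENNReal.ofReal (-z - t)) :=
      ((measurable_const.sub measurable_id).ennreal_ofReal).add
        ((measurable_const.sub measurable_id).ennreal_ofReal)
    rw [lintegral_withDensity_eq_lintegral_mul _ hdens hg]
    have hsplit : ∫⁻ t in Set.Ioi (0:ℝ),
        ENNReal.ofReal (p * (p-1) * t ^ (p-2))
          * (ENNReal.ofReal (z - t) + ENNReal.ofReal (-z - t)) ∂volume
        = (∫⁻ t in Set.Ioi (0:ℝ),
            ENNReal.ofReal (p * (p-1) * t ^ (p-2)) * ENNReal.ofReal (z - t) ∂volume)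
          + ∫⁻ t in Set.Ioi (0:ℝ),
            ENNReal.ofReal (p * (p-1) * t ^ (p-2)) * ENNReal.ofReal (-z - t) ∂volume := by
      simp_rw [mul_add]
      exact lintegral_add_left
        (hdens.mul ((measurable_const.sub measurable_id).ennreal_ofReal)) _
    simp only [Pi.mul_apply]
    rw [hsplit, key_integral h1 z, key_integral h1 (-z)]
    rcases le_total 0 z with h | h
    · rw [max_eq_right (by linarith : -z ≤ 0), Real.zero_rpow (by linarith), ENNReal.ofReal_zero,
        add_zero, max_eq_left h, abs_of_nonneg h]
    · rw [max_eq_right h, Real.zero_rpow (by linarith), ENNReal.ofReal_zero,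
        zero_add, max_eq_left (by linarith : 0 ≤ -z), abs_of_nonpos h]

section Assembly

variable {μ ν : Measure ℝ}

lemma slice_lower' (γ : Measure (ℝ × ℝ)) (hγ1 : γ.map Prod.fst = μ) (hγ2 : γ.map Prod.snd = ν)
    (r s : ℝ) :
    ν (Set.Ioi r) - μ (Set.Ioi s) ≤ γ {q : ℝ × ℝ | q.1 ≤ s ∧ r < q.2} := by
  have hA : γ (Prod.snd ⁻¹' Set.Ioi r) = ν (Set.Ioi r) := by
    rw [← hγ2, Measure.map_apply measurable_snd measurableSet_Ioi]
  have hB : γ (Prod.fst ⁻¹' Set.Ioi s) = μ (Set.Ioi s) := by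
    rw [← hγ1, Measure.map_apply measurable_fst measurableSet_Ioi]
  rw [← hA, ← hB, tsub_le_iff_right]
  calc γ (Prod.snd ⁻¹' Set.Ioi r)
      ≤ γ (Prod.snd ⁻¹' Set.Ioi r ∩ {q : ℝ × ℝ | q.1 ≤ s})
        + γ (Prod.snd ⁻¹' Set.Ioi r \ {q : ℝ × ℝ | q.1 ≤ s}) := measure_le_inter_add_diff _ _ _
    _ ≤ γ {q : ℝ × ℝ | q.1 ≤ s ∧ r < q.2} + γ (Prod.fst ⁻¹' Set.Ioi s) := by
        gcongr γ ?_ + γ ?_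
        · intro q hq; exact ⟨hq.2, hq.1⟩
        · intro q hq; simpa using not_le.1 hq.2

lemma cost_eq_sigma {p : ℝ} (hp : 1 ≤ p) (γ : Measure (ℝ × ℝ)) [SFinite γ] :
    ∫⁻ q, ENNReal.ofReal (|q.1 - q.2| ^ p) ∂γ
      = ∫⁻ t, ∫⁻ q, (ENNReal.ofReal (q.1 - q.2 - t) + ENNReal.ofReal (q.2 - q.1 - t)) ∂γ
          ∂(sigmaP p) := by
  have h1 : ∀ q : ℝ × ℝ, ENNReal.ofReal (|q.1 - q.2| ^ p)
      = ∫⁻ t, (ENNReal.ofReal (q.1 - q.2 - t) + ENNReal.ofReal (q.2 - q.1 - t)) ∂(sigmaP p) := by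
    intro q
    have h := rep_lemma hp (q.1 - q.2)
    have : ∀ t : ℝ, -(q.1 - q.2) - t = q.2 - q.1 - t := fun t => by ring
    simp only [this] at h
    exact h
  rw [lintegral_congr h1]
  apply lintegral_lintegral_swap
  exact (((measurable_fst.fst.sub measurable_fst.snd).sub measurable_snd).ennreal_ofReal.add
    ((measurable_fst.snd.sub measurable_fst.fst).sub measurable_snd).ennreal_ofReal).aemeasurable

lemma I_expand (γ : Measure (ℝ × ℝ)) [IsProbabilityMeasure γ] (t : ℝ) :
    ∫⁻ q, (ENNReal.ofReal (q.1 - q.2 - t) + ENNReal.ofReal (q.2 - q.1 - t)) ∂γ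
      = (∫⁻ s, γ {q : ℝ × ℝ | q.2 ≤ s ∧ s + t < q.1} ∂volume)
        + ∫⁻ s, γ {q : ℝ × ℝ | q.1 ≤ s ∧ s + t < q.2} ∂volume := by
  rw [lintegral_add_left
    (show Measurable (fun q : ℝ × ℝ => ENNReal.ofReal (q.1 - q.2 - t)) from
    (((measurable_fst.sub measurable_snd).sub measurable_const).ennreal_ofReal))]
  congr 1
  · exact fubini_slice γ t
  · haveI : IsProbabilityMeasure (γ.map Prod.swap) :=
      Measure.isProbabilityMeasure_map measurable_swap.aemeasurable
    have hswap : ∫⁻ q : ℝ × ℝ, ENNReal.ofReal (q.2 - q.1 - t) ∂γ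
        = ∫⁻ q : ℝ × ℝ, ENNReal.ofReal (q.1 - q.2 - t) ∂(γ.map Prod.swap) := by
      rw [lintegral_map
        (show Measurable (fun q : ℝ × ℝ => ENNReal.ofReal (q.1 - q.2 - t)) from
        (((measurable_fst.sub measurable_snd).sub measurable_const).ennreal_ofReal))
        measurable_swap]
      rfl
    rw [hswap, fubini_slice]
    apply lintegral_congr
    intro s
    rw [show {q : ℝ × ℝ | q.2 ≤ s ∧ s + t < q.1}
        = {q : ℝ × ℝ | q.2 ≤ s} ∩ {q : ℝ × ℝ | s + t < q.1} from rfl,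
      Measure.map_apply measurable_swap
      ((measurableSet_le measurable_snd measurable_const).inter
        (measurableSet_lt measurable_const measurable_fst))]
    have : Prod.swap ⁻¹' ({a : ℝ × ℝ | a.2 ≤ s} ∩ {a : ℝ × ℝ | s + t < a.1})
        = {q : ℝ × ℝ | q.1 ≤ s ∧ s + t < q.2} := by
      ext q
      simp only [Set.mem_preimage, Set.mem_inter_iff, Set.mem_setOf_eq, Prod.fst_swap,
        Prod.snd_swap]
    rw [this]

end Assembly

theorem stmt9 (p : ℝ) (hp : 1 ≤ p) (μ ν : Measure ℝ)
    [IsProbabilityMeasure μ] [IsProbabilityMeasure ν]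
    (hμm : ∫⁻ x, (‖x‖₊ : ℝ≥0∞) ^ p ∂μ < ⊤)
    (hνm : ∫⁻ y, (‖y‖₊ : ℝ≥0∞) ^ p ∂ν < ⊤) :
    Wpp p μ ν
      = ∫⁻ t in Set.Ioo (0 : ℝ) 1,
          ENNReal.ofReal (|quantile μ t - quantile ν t| ^ p) := by
  have hp0 : (0:ℝ) ≤ p := by linarith
  -- the quantile coupling
  set κ : Measure ℝ := volume.restrict (Set.Ioo (0:ℝ) 1) with hκ
  set T : ℝ → ℝ × ℝ := fun u => (quantile μ u, quantile ν u) with hT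
  have hTae : AEMeasurable T κ := (aemeasurable_quantile μ).prodMk (aemeasurable_quantile ν)
  set γ₀ : Measure (ℝ × ℝ) := Measure.map T κ with hγ₀
  haveI : IsProbabilityMeasure κ := ⟨by rw [hκ]; simp [Real.volume_Ioo]⟩
  haveI : IsProbabilityMeasure γ₀ := Measure.isProbabilityMeasure_map hTae
  have hm1 : γ₀.map Prod.fst = μ := by
    rw [hγ₀, AEMeasurable.map_map_of_aemeasurable measurable_fst.aemeasurable hTae]
    exact map_quantile μ
  have hm2 : γ₀.map Prod.snd = ν := by
    rw [hγ₀, AEMeasurable.map_map_of_aemeasurable measurable_snd.aemeasurable hTae]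
    exact map_quantile ν
  -- rewriting the transport cost
  have hcost : ∀ γ : Measure (ℝ × ℝ),
      ∫⁻ q, (‖q.1 - q.2‖₊ : ℝ≥0∞) ^ p ∂γ = ∫⁻ q, ENNReal.ofReal (|q.1 - q.2| ^ p) ∂γ := by
    intro γ
    apply lintegral_congr
    intro q
    rw [← enorm_eq_nnnorm, Real.enorm_eq_ofReal_abs, ENNReal.ofReal_rpow_of_nonneg (abs_nonneg _) hp0]
  have hrp : Measurable (fun x : ℝ => x ^ p) := by measurability
  have hfmeas : Measurable (fun q : ℝ × ℝ => ENNReal.ofReal (|q.1 - q.2| ^ p)) :=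
    (hrp.comp (measurable_fst.sub measurable_snd).abs).ennreal_ofReal
  -- the cost of the quantile coupling is the RHS
  have hE : ∫⁻ q, ENNReal.ofReal (|q.1 - q.2| ^ p) ∂γ₀
      = ∫⁻ t in Set.Ioo (0 : ℝ) 1, ENNReal.ofReal (|quantile μ t - quantile ν t| ^ p) := by
    rw [hγ₀, lintegral_map' hfmeas.aemeasurable hTae]
  -- slice equalities for the quantile coupling
  have hslice1 : ∀ t s : ℝ, γ₀ {q : ℝ × ℝ | q.2 ≤ s ∧ s + t < q.1}
      = μ (Set.Ioi (s + t)) - ν (Set.Ioi s) := by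
    intro t s
    rw [hγ₀, Measure.map_apply_of_aemeasurable hTae
      (show MeasurableSet {q : ℝ × ℝ | q.2 ≤ s ∧ s + t < q.1} from
        (measurableSet_le measurable_snd measurable_const).inter
        (measurableSet_lt measurable_const measurable_fst)),
      hκ, Measure.restrict_apply' measurableSet_Ioo]
    have : T ⁻¹' {q : ℝ × ℝ | q.2 ≤ s ∧ s + t < q.1}
        = {u : ℝ | quantile ν u ≤ s ∧ s + t < quantile μ u} := rfl
    rw [this, slice_quantile_coupling μ ν (s + t) s, prob_Ioi_sub]
  have hslice2 : ∀ t s : ℝ, γ₀ {q : ℝ × ℝ | q.1 ≤ s ∧ s + t < q.2}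
      = ν (Set.Ioi (s + t)) - μ (Set.Ioi s) := by
    intro t s
    rw [hγ₀, Measure.map_apply_of_aemeasurable hTae
      (show MeasurableSet {q : ℝ × ℝ | q.1 ≤ s ∧ s + t < q.2} from
        (measurableSet_le measurable_fst measurable_const).inter
        (measurableSet_lt measurable_const measurable_snd)),
      hκ, Measure.restrict_apply' measurableSet_Ioo]
    have : T ⁻¹' {q : ℝ × ℝ | q.1 ≤ s ∧ s + t < q.2}
        = {u : ℝ | quantile μ u ≤ s ∧ s + t < quantile ν u} := rfl
    rw [this, slice_quantile_coupling ν μ (s + t) s, prob_Ioi_sub]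
  -- the key comparison
  have hmain : ∀ (γ : Measure (ℝ × ℝ)), γ.map Prod.fst = μ → γ.map Prod.snd = ν →
      ∫⁻ q, ENNReal.ofReal (|q.1 - q.2| ^ p) ∂γ₀
        ≤ ∫⁻ q, ENNReal.ofReal (|q.1 - q.2| ^ p) ∂γ := by
    intro γ h1 h2
    haveI : IsProbabilityMeasure γ := by
      constructor
      rw [← Set.preimage_univ (f := Prod.fst), ← Measure.map_apply measurable_fst .univ, h1,
        measure_univ]
    rw [cost_eq_sigma hp γ, cost_eq_sigma hp γ₀]
    apply lintegral_mono
    intro t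
    dsimp only
    rw [I_expand γ t, I_expand γ₀ t]
    have e1 : ∫⁻ s, γ₀ {q : ℝ × ℝ | q.2 ≤ s ∧ s + t < q.1} ∂volume
        ≤ ∫⁻ s, γ {q : ℝ × ℝ | q.2 ≤ s ∧ s + t < q.1} ∂volume := by
      apply lintegral_mono
      intro s
      dsimp only
      rw [hslice1 t s]
      exact slice_lower γ h1 h2 (s + t) s
    have e2 : ∫⁻ s, γ₀ {q : ℝ × ℝ | q.1 ≤ s ∧ s + t < q.2} ∂volume
        ≤ ∫⁻ s, γ {q : ℝ × ℝ | q.1 ≤ s ∧ s + t < q.2} ∂volume := by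
      apply lintegral_mono
      intro s
      dsimp only
      rw [hslice2 t s]
      exact slice_lower' γ h1 h2 (s + t) s
    exact add_le_add e1 e2
  -- conclusion
  apply le_antisymm
  · have hW : Wpp p μ ν ≤ ∫⁻ q, (‖q.1 - q.2‖₊ : ℝ≥0∞) ^ p ∂γ₀ :=
      iInf_le_of_le γ₀ (iInf_le_of_le hm1 (iInf_le_of_le hm2 le_rfl))
    rw [hcost γ₀, hE] at hW
    exact hW
  · apply le_iInf
    intro γ
    apply le_iInf
    intro h1
    apply le_iInf
    intro h2
    rw [hcost γ, ← hE]
    exact hmain γ h1 h2
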